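/- Let p ∈ (1,2] and let ω : [0,∞) → E be twice differentiable into a real inner product space, nonvanishing, satisfying ω'' = Aω in the sense that ⟨ω_t'', ω_t⟩ ≥ 0 for all t (e.g. ω_t = e^{-t√A}ω with A nonnegative). Then t ↦ |ω_t|^p satisfies d²/dt² |ω_t|^p ≥ p(p-1)|ω_t'|²|ω_t|^{p-2} + p⟨ω_t'',ω_t⟩|ω_t|^{p-2} ≥ 0. -/

import Mathlib

open scoped InnerProductSpace

/-- Inequality (equaequa)/(posig): for `p ∈ (1,2]` and a twice differentiable nonvanishing
`ω : ℝ → E` with `⟨ω'' t, ω t⟩ ≥ 0` for `t ≥ 0`,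
`d²/dt² ‖ω t‖^p ≥ p(p-1)‖ω' t‖²‖ω t‖^{p-2} + p⟨ω'' t, ω t⟩‖ω t‖^{p-2} ≥ 0`. -/
theorem stmt16 (E : Type*) [NormedAddCommGroup E] [InnerProductSpace ℝ E]
    (p : ℝ) (hp1 : 1 < p) (hp2 : p ≤ 2)
    (ω : ℝ → E) (hω : ContDiff ℝ 2 ω) (hne : ∀ t : ℝ, ω t ≠ 0)
    (hconv : ∀ t : ℝ, 0 ≤ t → 0 ≤ ⟪deriv (deriv ω) t, ω t⟫_ℝ)
    (t : ℝ) (ht : 0 ≤ t) :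
    p * (p - 1) * ‖deriv ω t‖ ^ 2 * ‖ω t‖ ^ (p - 2) +
          p * ⟪deriv (deriv ω) t, ω t⟫_ℝ * ‖ω t‖ ^ (p - 2) ≤
        deriv (deriv (fun s => ‖ω s‖ ^ p)) t ∧
      0 ≤ p * (p - 1) * ‖deriv ω t‖ ^ 2 * ‖ω t‖ ^ (p - 2) +
            p * ⟪deriv (deriv ω) t, ω t⟫_ℝ * ‖ω t‖ ^ (p - 2) := by
  have hω1 : Differentiable ℝ ω := hω.differentiable (by norm_num)
  have hω2 : ContDiff ℝ 1 (deriv ω) := by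
    have := (contDiff_succ_iff_deriv (n := 1)).mp (by rw [one_add_one_eq_two]; exact hω)
    exact this.2.2
  have hω'd : Differentiable ℝ (deriv ω) := hω2.differentiable one_ne_zero
  set g : ℝ → ℝ := fun s => ⟪ω s, ω s⟫_ℝ with hgdef
  have hgpos : ∀ s, 0 < g s := by
    intro s
    have : g s = ‖ω s‖ ^ 2 := real_inner_self_eq_norm_sq (ω s)
    rw [this]
    exact pow_pos (norm_pos_iff.mpr (hne s)) 2
  have hg : ∀ s, HasDerivAt g (2 * ⟪deriv ω s, ω s⟫_ℝ) s := by
    intro s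
    have := (hω1 s).hasDerivAt.inner ℝ (hω1 s).hasDerivAt
    simpa [hgdef, real_inner_comm, two_mul] using this
  -- first derivative of ‖ω‖^p
  have hnorm_eq : ∀ s, ‖ω s‖ ^ p = g s ^ (p / 2) := by
    intro s
    show ‖ω s‖ ^ p = ⟪ω s, ω s⟫_ℝ ^ (p / 2)
    rw [real_inner_self_eq_norm_sq, ← Real.rpow_natCast (‖ω s‖) 2,
      ← Real.rpow_mul (norm_nonneg _)]
    congr 1
    push_cast
    ring
  have hF : ∀ s, HasDerivAt (fun u => ‖ω u‖ ^ p)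
      (p * (⟪deriv ω s, ω s⟫_ℝ * g s ^ (p / 2 - 1))) s := by
    intro s
    have := (hg s).rpow_const (p := p / 2) (Or.inl (hgpos s).ne')
    have h2 : HasDerivAt (fun u => g u ^ (p / 2))
        (p * (⟪deriv ω s, ω s⟫_ℝ * g s ^ (p / 2 - 1))) s := by
      convert this using 1; ring
    exact h2.congr_of_eventuallyEq (Filter.Eventually.of_forall fun u => (hnorm_eq u))
  have hderiv1 : deriv (fun s => ‖ω s‖ ^ p)
      = fun s => p * (⟪deriv ω s, ω s⟫_ℝ * g s ^ (p / 2 - 1)) :=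
    funext fun s => (hF s).deriv
  -- second derivative
  have hinner' : HasDerivAt (fun s => ⟪deriv ω s, ω s⟫_ℝ)
      (⟪deriv ω t, deriv ω t⟫_ℝ + ⟪deriv (deriv ω) t, ω t⟫_ℝ) t :=
    (hω'd t).hasDerivAt.inner ℝ (hω1 t).hasDerivAt
  have hgr : HasDerivAt (fun s => g s ^ (p / 2 - 1))
      (2 * ⟪deriv ω t, ω t⟫_ℝ * (p / 2 - 1) * g t ^ (p / 2 - 2)) t := by
    have := (hg t).rpow_const (p := p / 2 - 1) (Or.inl (hgpos t).ne')
    convert this using 1; ring_nf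
  have hF2 : HasDerivAt (deriv (fun s => ‖ω s‖ ^ p))
      (p * ((⟪deriv ω t, deriv ω t⟫_ℝ + ⟪deriv (deriv ω) t, ω t⟫_ℝ) * g t ^ (p / 2 - 1)
        + ⟪deriv ω t, ω t⟫_ℝ * (2 * ⟪deriv ω t, ω t⟫_ℝ * (p / 2 - 1) * g t ^ (p / 2 - 2)))) t := by
    rw [hderiv1]
    exact ((hinner'.mul hgr).const_mul p)
  have hD2 : deriv (deriv (fun s => ‖ω s‖ ^ p)) t
      = p * ((⟪deriv ω t, deriv ω t⟫_ℝ + ⟪deriv (deriv ω) t, ω t⟫_ℝ) * g t ^ (p / 2 - 1)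
        + ⟪deriv ω t, ω t⟫_ℝ * (2 * ⟪deriv ω t, ω t⟫_ℝ * (p / 2 - 1) * g t ^ (p / 2 - 2))) :=
    hF2.deriv
  -- translate powers
  have hpow1 : ‖ω t‖ ^ (p - 2) = g t ^ (p / 2 - 1) := by
    show _ = (⟪ω t, ω t⟫_ℝ) ^ (p / 2 - 1)
    rw [real_inner_self_eq_norm_sq, ← Real.rpow_natCast (‖ω t‖) 2,
      ← Real.rpow_mul (norm_nonneg _)]
    congr 1
    ring
  have hgt : g t = ‖ω t‖ ^ 2 := real_inner_self_eq_norm_sq (ω t)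
  have hpow2 : g t ^ (p / 2 - 2) * g t = g t ^ (p / 2 - 1) := by
    rw [← Real.rpow_add_one (hgpos t).ne']
    congr 1
    ring
  have hcs : ⟪deriv ω t, ω t⟫_ℝ ^ 2 ≤ ‖deriv ω t‖ ^ 2 * g t := by
    rw [hgt]
    have := abs_real_inner_le_norm (deriv ω t) (ω t)
    nlinarith [abs_nonneg (⟪deriv ω t, ω t⟫_ℝ), sq_abs (⟪deriv ω t, ω t⟫_ℝ),
      norm_nonneg (deriv ω t), norm_nonneg (ω t)]
  have hdd : ⟪deriv ω t, deriv ω t⟫_ℝ = ‖deriv ω t‖ ^ 2 := real_inner_self_eq_norm_sq _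
  have hgp1 : 0 < g t ^ (p / 2 - 1) := Real.rpow_pos_of_pos (hgpos t) _
  have hgp2 : 0 < g t ^ (p / 2 - 2) := Real.rpow_pos_of_pos (hgpos t) _
  have key' : ⟪deriv ω t, ω t⟫_ℝ ^ 2 * g t ^ (p / 2 - 2)
      ≤ ‖deriv ω t‖ ^ 2 * g t ^ (p / 2 - 1) := by
    calc ⟪deriv ω t, ω t⟫_ℝ ^ 2 * g t ^ (p / 2 - 2)
        ≤ (‖deriv ω t‖ ^ 2 * g t) * g t ^ (p / 2 - 2) :=
          mul_le_mul_of_nonneg_right hcs hgp2.le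
      _ = ‖deriv ω t‖ ^ 2 * g t ^ (p / 2 - 1) := by rw [← hpow2]; ring
  constructor
  · rw [hD2, hpow1, hdd]
    have hfinal : 0 ≤ p * (2 - p) * (‖deriv ω t‖ ^ 2 * g t ^ (p / 2 - 1)
        - ⟪deriv ω t, ω t⟫_ℝ ^ 2 * g t ^ (p / 2 - 2)) :=
      mul_nonneg (mul_nonneg (by linarith) (by linarith)) (by linarith)
    nlinarith [hfinal]
  · have hI := hconv t ht
    have hr : (0:ℝ) ≤ ‖ω t‖ ^ (p - 2) := Real.rpow_nonneg (norm_nonneg _) _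
    have h1 : 0 ≤ p * (p - 1) * ‖deriv ω t‖ ^ 2 * ‖ω t‖ ^ (p - 2) := by
      apply mul_nonneg _ hr
      apply mul_nonneg (mul_nonneg (by linarith) (by linarith)) (sq_nonneg _)
    have h2 : 0 ≤ p * ⟪deriv (deriv ω) t, ω t⟫_ℝ * ‖ω t‖ ^ (p - 2) :=
      mul_nonneg (mul_nonneg (by linarith) hI) hr
    linarith
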